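/- Let p ≥ 2 be even. Define B_{P₂} = {(J¹, J²) ∈ A_p × A_p : the multisets S_{J¹} and S_{J²} intersect, and every element of S_{J¹} ∪ S_{J²} has multiplicity ≥ 2}, where A_p = {(j_1,…,j_p) ∈ {±1,…,±b_n}^p : Σ_k (-1)^k j_k = 0}. Then |B_{P₂}| = O(b_n^{p−1}), i.e., there is a constant C depending only on p with |B_{P₂}| ≤ C b_n^{p−1} for all n. -/

import Mathlib

open Finset

namespace BP2

/-! ### Setup: distinct values, sorted list, ranks -/

def Vst (p : ℕ) (g1 g2 : Fin p → ℤ) : Finset ℤ := (Finset.univ.image g1) ∪ (Finset.univ.image g2)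

def Slst (p : ℕ) (g1 g2 : Fin p → ℤ) : List ℤ := (Vst p g1 g2).sort (· ≤ ·)

lemma Slst_length (p g1 g2) : (Slst p g1 g2).length = (Vst p g1 g2).card := Finset.length_sort _

lemma mem_Slst {p g1 g2} {v : ℤ} : v ∈ Slst p g1 g2 ↔ v ∈ Vst p g1 g2 := Finset.mem_sort _

lemma mem_Vst_left (p g1 g2) (k : Fin p) : g1 k ∈ Vst p g1 g2 :=
  Finset.mem_union_left _ (Finset.mem_image_of_mem _ (Finset.mem_univ k))
lemma mem_Vst_right (p g1 g2) (k : Fin p) : g2 k ∈ Vst p g1 g2 :=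
  Finset.mem_union_right _ (Finset.mem_image_of_mem _ (Finset.mem_univ k))

lemma card_Vst_le (p g1 g2) : (Vst p g1 g2).card ≤ 2 * p := by
  calc (Vst p g1 g2).card ≤ (Finset.univ.image g1).card + (Finset.univ.image g2).card :=
        Finset.card_union_le _ _
    _ ≤ p + p := by
        have h1 := Finset.card_image_le (s := (Finset.univ : Finset (Fin p))) (f := g1)
        have h2 := Finset.card_image_le (s := (Finset.univ : Finset (Fin p))) (f := g2)
        simp at h1 h2; omega
    _ = 2 * p := by ring

def rnk (p : ℕ) (g1 g2 : Fin p → ℤ) (v : ℤ) : Fin (2*p+1) :=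
  ⟨(Slst p g1 g2).idxOf v, by
    have h1 := List.idxOf_le_length (a := v) (l := Slst p g1 g2)
    have h2 := card_Vst_le p g1 g2
    rw [Slst_length] at h1
    omega⟩

def iMin (p : ℕ) (g1 g2 : Fin p → ℤ) : ℤ :=
  if h : ((Finset.univ.image g1) ∩ (Finset.univ.image g2)).Nonempty
  then ((Finset.univ.image g1) ∩ (Finset.univ.image g2)).min' h else 0

def r0 (p : ℕ) (g1 g2 : Fin p → ℤ) : ℕ := (Slst p g1 g2).idxOf (iMin p g1 g2)

def Wlst (p : ℕ) (g1 g2 : Fin p → ℤ) : List ℤ :=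
  if (Vst p g1 g2).card = p then (Slst p g1 g2).eraseIdx (r0 p g1 g2) else Slst p g1 g2

def wint (p : ℕ) (g1 g2 : Fin p → ℤ) (k : ℕ) : ℤ := (Wlst p g1 g2).getD k 0

lemma mem_Icc_of_wint (p bn : ℕ) (hbn : 0 < bn) (g1 g2 : Fin p → ℤ)
    (h1 : ∀ k, |g1 k| ≤ (bn:ℤ)) (h2 : ∀ k, |g2 k| ≤ (bn:ℤ)) (k : ℕ) :
    wint p g1 g2 k ∈ Finset.Icc (-(bn:ℤ)) (bn:ℤ) := by
  have hV : ∀ v ∈ Vst p g1 g2, v ∈ Finset.Icc (-(bn:ℤ)) (bn:ℤ) := by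
    intro v hv
    rw [Finset.mem_Icc]
    simp only [Vst, Finset.mem_union, Finset.mem_image, Finset.mem_univ, true_and] at hv
    rcases hv with ⟨k, rfl⟩ | ⟨k, rfl⟩
    · have := abs_le.1 (h1 k); exact ⟨this.1, this.2⟩
    · have := abs_le.1 (h2 k); exact ⟨this.1, this.2⟩
  have hW : ∀ v ∈ Wlst p g1 g2, v ∈ Vst p g1 g2 := by
    intro v hv
    apply mem_Slst.1
    unfold Wlst at hv
    split at hv
    · exact (List.eraseIdx_sublist _ _).mem hv
    · exact hv
  unfold wint
  by_cases h : k < (Wlst p g1 g2).length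
  · rw [List.getD_eq_getElem _ _ h]
    exact hV _ (hW _ (List.getElem_mem _))
  · rw [List.getD_eq_default _ _ (le_of_not_gt h)]
    rw [Finset.mem_Icc]
    constructor
    · simp
    · positivity

/-! ### Multiplicities -/

def mcnt (p : ℕ) (g1 g2 : Fin p → ℤ) (v : ℤ) : ℕ :=
  (Finset.univ.filter fun k => g1 k = v).card + (Finset.univ.filter fun k => g2 k = v).card

lemma sum_mcnt (p : ℕ) (g1 g2 : Fin p → ℤ) :
    ∑ v ∈ Vst p g1 g2, mcnt p g1 g2 v = 2 * p := by
  have h1 : (Finset.univ : Finset (Fin p)).card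
      = ∑ v ∈ Vst p g1 g2, (Finset.univ.filter fun k => g1 k = v).card :=
    Finset.card_eq_sum_card_fiberwise (fun k _ => mem_Vst_left p g1 g2 k)
  have h2 : (Finset.univ : Finset (Fin p)).card
      = ∑ v ∈ Vst p g1 g2, (Finset.univ.filter fun k => g2 k = v).card :=
    Finset.card_eq_sum_card_fiberwise (fun k _ => mem_Vst_right p g1 g2 k)
  have hc : (Finset.univ : Finset (Fin p)).card = p := by simp
  unfold mcnt
  rw [Finset.sum_add_distrib, ← h1, ← h2, hc]
  ring

lemma two_le_mcnt (p : ℕ) (g1 g2 : Fin p → ℤ)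
    (hm : ∀ v : ℤ, mcnt p g1 g2 v = 0 ∨ 2 ≤ mcnt p g1 g2 v) :
    ∀ v ∈ Vst p g1 g2, 2 ≤ mcnt p g1 g2 v := by
  intro v hv
  rcases hm v with h | h
  · exfalso
    simp only [Vst, Finset.mem_union, Finset.mem_image, Finset.mem_univ, true_and] at hv
    have : 0 < mcnt p g1 g2 v := by
      unfold mcnt
      rcases hv with ⟨k, hk⟩ | ⟨k, hk⟩
      · have : k ∈ Finset.univ.filter fun k => g1 k = v := by simp [hk]
        have := Finset.card_pos.2 ⟨k, this⟩; omega
      · have : k ∈ Finset.univ.filter fun k => g2 k = v := by simp [hk]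
        have := Finset.card_pos.2 ⟨k, this⟩; omega
    omega
  · exact h

lemma card_Vst_le_p (p : ℕ) (g1 g2 : Fin p → ℤ)
    (hm : ∀ v : ℤ, mcnt p g1 g2 v = 0 ∨ 2 ≤ mcnt p g1 g2 v) :
    (Vst p g1 g2).card ≤ p := by
  have h := sum_mcnt p g1 g2
  have h2 : 2 * (Vst p g1 g2).card ≤ ∑ v ∈ Vst p g1 g2, mcnt p g1 g2 v := by
    calc 2 * (Vst p g1 g2).card = ∑ _v ∈ Vst p g1 g2, 2 := by
          rw [Finset.sum_const, smul_eq_mul, mul_comm]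
      _ ≤ _ := Finset.sum_le_sum (two_le_mcnt p g1 g2 hm)
  omega

lemma mcnt_eq_two (p : ℕ) (g1 g2 : Fin p → ℤ)
    (hm : ∀ v : ℤ, mcnt p g1 g2 v = 0 ∨ 2 ≤ mcnt p g1 g2 v)
    (hd : (Vst p g1 g2).card = p) :
    ∀ v ∈ Vst p g1 g2, mcnt p g1 g2 v = 2 := by
  intro v hv
  by_contra hne
  have h3 : 2 < mcnt p g1 g2 v := lt_of_le_of_ne (two_le_mcnt p g1 g2 hm v hv) (Ne.symm hne)
  have : (∑ _v ∈ Vst p g1 g2, 2) < ∑ v ∈ Vst p g1 g2, mcnt p g1 g2 v :=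
    Finset.sum_lt_sum (fun i hi => two_le_mcnt p g1 g2 hm i hi) ⟨v, hv, h3⟩
  rw [Finset.sum_const, smul_eq_mul, sum_mcnt, hd] at this
  omega

/-! ### Rank bookkeeping -/

lemma idx_lt {p g1 g2} {v : ℤ} (hv : v ∈ Vst p g1 g2) :
    (Slst p g1 g2).idxOf v < (Slst p g1 g2).length :=
  List.idxOf_lt_length_iff.2 (mem_Slst.2 hv)

lemma getd_idx {p g1 g2} {v : ℤ} (hv : v ∈ Vst p g1 g2) :
    (Slst p g1 g2).getD ((Slst p g1 g2).idxOf v) 0 = v := by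
  rw [List.getD_eq_getElem _ _ (idx_lt hv)]
  exact List.getElem_idxOf _

lemma idx_getElem {p g1 g2} {r : ℕ} (hr : r < (Slst p g1 g2).length) :
    (Slst p g1 g2).idxOf ((Slst p g1 g2)[r]) = r := by
  have hnd : (Slst p g1 g2).Nodup := Finset.sort_nodup _ _
  have hm : (Slst p g1 g2)[r] ∈ Slst p g1 g2 := List.getElem_mem _
  have hlt := List.idxOf_lt_length_iff.2 hm
  have := List.getElem_idxOf (x := (Slst p g1 g2)[r]) (xs := Slst p g1 g2) hlt
  exact (List.Nodup.getElem_inj_iff hnd).1 this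

lemma idx_inj {p g1 g2} {u v : ℤ} (hu : u ∈ Vst p g1 g2) (hv : v ∈ Vst p g1 g2) :
    (Slst p g1 g2).idxOf u = (Slst p g1 g2).idxOf v ↔ u = v :=
  List.idxOf_inj (mem_Slst.2 hu)

lemma idx_mono {p g1 g2} {u v : ℤ} (hu : u ∈ Vst p g1 g2) (hv : v ∈ Vst p g1 g2)
    (huv : u ≤ v) : (Slst p g1 g2).idxOf u ≤ (Slst p g1 g2).idxOf v := by
  have hsort : (Slst p g1 g2).SortedLT := Finset.sortedLT_sort _
  have hsm := hsort.strictMono_get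
  by_contra hcon
  push_neg at hcon
  have h1 : (Slst p g1 g2).get ⟨_, idx_lt hv⟩ < (Slst p g1 g2).get ⟨_, idx_lt hu⟩ :=
    hsm (by exact hcon)
  simp only [List.get_eq_getElem, List.getElem_idxOf] at h1
  omega

lemma rank_image (p : ℕ) (g1 g2 : Fin p → ℤ) :
    ((Finset.univ.image fun k => (Slst p g1 g2).idxOf (g1 k)) ∪
      (Finset.univ.image fun k => (Slst p g1 g2).idxOf (g2 k)))
      = Finset.range (Vst p g1 g2).card := by
  ext r
  simp only [Finset.mem_union, Finset.mem_image, Finset.mem_univ, true_and, Finset.mem_range]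
  constructor
  · rintro (⟨k, rfl⟩ | ⟨k, rfl⟩)
    · have := idx_lt (mem_Vst_left p g1 g2 k); rwa [Slst_length] at this
    · have := idx_lt (mem_Vst_right p g1 g2 k); rwa [Slst_length] at this
  · intro hr
    rw [← Slst_length] at hr
    have hmem : (Slst p g1 g2)[r] ∈ Vst p g1 g2 := mem_Slst.1 (List.getElem_mem _)
    have hidx := idx_getElem hr
    simp only [Vst, Finset.mem_union, Finset.mem_image, Finset.mem_univ, true_and] at hmem
    rcases hmem with ⟨k, hk⟩ | ⟨k, hk⟩
    · exact Or.inl ⟨k, by rw [hk, hidx]⟩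
    · exact Or.inr ⟨k, by rw [hk, hidx]⟩

lemma iMin_mem (p : ℕ) (g1 g2 : Fin p → ℤ) (hint : ∃ k l, g1 k = g2 l) :
    iMin p g1 g2 ∈ (Finset.univ.image g1) ∩ (Finset.univ.image g2) := by
  obtain ⟨k, l, hkl⟩ := hint
  have hne : ((Finset.univ.image g1) ∩ (Finset.univ.image g2)).Nonempty :=
    ⟨g1 k, Finset.mem_inter.2 ⟨Finset.mem_image_of_mem _ (Finset.mem_univ k),
      by rw [hkl]; exact Finset.mem_image_of_mem _ (Finset.mem_univ l)⟩⟩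
  rw [iMin, dif_pos hne]
  exact Finset.min'_mem _ hne

lemma iMin_le (p : ℕ) (g1 g2 : Fin p → ℤ) {v : ℤ}
    (hv : v ∈ (Finset.univ.image g1) ∩ (Finset.univ.image g2)) : iMin p g1 g2 ≤ v := by
  have hne : ((Finset.univ.image g1) ∩ (Finset.univ.image g2)).Nonempty := ⟨v, hv⟩
  rw [iMin, dif_pos hne]
  exact Finset.min'_le _ _ hv

lemma inter_sub_Vst (p : ℕ) (g1 g2 : Fin p → ℤ) :
    (Finset.univ.image g1) ∩ (Finset.univ.image g2) ⊆ Vst p g1 g2 :=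
  fun _ hv => Finset.mem_union_left _ (Finset.mem_inter.1 hv).1

lemma r0_eq (p : ℕ) (g1 g2 : Fin p → ℤ) (hint : ∃ k l, g1 k = g2 l) :
    ∃ hne : ((Finset.univ.image fun k => (Slst p g1 g2).idxOf (g1 k)) ∩
        (Finset.univ.image fun k => (Slst p g1 g2).idxOf (g2 k))).Nonempty,
      r0 p g1 g2 = ((Finset.univ.image fun k => (Slst p g1 g2).idxOf (g1 k)) ∩
        (Finset.univ.image fun k => (Slst p g1 g2).idxOf (g2 k))).min' hne := by
  have hv0 := iMin_mem p g1 g2 hint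
  have hv0V : iMin p g1 g2 ∈ Vst p g1 g2 := inter_sub_Vst p g1 g2 hv0
  obtain ⟨hv01, hv02⟩ := Finset.mem_inter.1 hv0
  obtain ⟨a, -, ha⟩ := Finset.mem_image.1 hv01
  obtain ⟨b, -, hb⟩ := Finset.mem_image.1 hv02
  have hmem : r0 p g1 g2 ∈ (Finset.univ.image fun k => (Slst p g1 g2).idxOf (g1 k)) ∩
      (Finset.univ.image fun k => (Slst p g1 g2).idxOf (g2 k)) := by
    refine Finset.mem_inter.2 ⟨Finset.mem_image.2 ⟨a, Finset.mem_univ a, ?_⟩,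
      Finset.mem_image.2 ⟨b, Finset.mem_univ b, ?_⟩⟩
    · rw [ha]; rfl
    · rw [hb]; rfl
  refine ⟨⟨_, hmem⟩, ?_⟩
  refine le_antisymm (Finset.le_min' _ _ _ ?_) (Finset.min'_le _ _ hmem)
  intro y hy
  obtain ⟨hy1, hy2⟩ := Finset.mem_inter.1 hy
  obtain ⟨c, -, hc⟩ := Finset.mem_image.1 hy1
  obtain ⟨e, -, he⟩ := Finset.mem_image.1 hy2
  have hce : g1 c = g2 e := by
    refine (idx_inj (mem_Vst_left p g1 g2 c) (mem_Vst_right p g1 g2 e)).1 ?_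
    rw [hc, he]
  have hcI : g1 c ∈ (Finset.univ.image g1) ∩ (Finset.univ.image g2) :=
    Finset.mem_inter.2 ⟨Finset.mem_image_of_mem _ (Finset.mem_univ c),
      by rw [hce]; exact Finset.mem_image_of_mem _ (Finset.mem_univ e)⟩
  have := idx_mono hv0V (mem_Vst_left p g1 g2 c) (iMin_le p g1 g2 hcI)
  rw [hc] at this
  exact this

/-! ### erase lemmas -/

lemma getD_eraseIdx_of_lt (l : List ℤ) (r j : ℕ) (hr : r < l.length) (hj : j < r) :
    (l.eraseIdx r).getD j 0 = l.getD j 0 := by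
  have hjl : j < (l.eraseIdx r).length := by rw [List.length_eraseIdx, if_pos hr]; omega
  rw [List.getD_eq_getElem _ _ hjl, List.getD_eq_getElem _ _ (by omega), List.getElem_eraseIdx,
    dif_pos hj]

lemma getD_eraseIdx_of_gt (l : List ℤ) (r j : ℕ) (hj : j < l.length) (h : r < j) :
    (l.eraseIdx r).getD (j-1) 0 = l.getD j 0 := by
  have hr : r < l.length := by omega
  have hjl : j - 1 < (l.eraseIdx r).length := by rw [List.length_eraseIdx, if_pos hr]; omega
  rw [List.getD_eq_getElem _ _ hjl, List.getD_eq_getElem _ _ hj, List.getElem_eraseIdx,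
    dif_neg (by omega)]
  congr 1
  omega

/-! ### The sorted value list is determined by the encoding -/

lemma slst_eq (p : ℕ) (g1 g2 g1' g2' : Fin p → ℤ)
    (hsum : ∑ k : Fin p, (-1:ℤ)^((k:ℕ)+1) * g1 k = 0)
    (hsum' : ∑ k : Fin p, (-1:ℤ)^((k:ℕ)+1) * g1' k = 0)
    (hint : ∃ k l, g1 k = g2 l)
    (hint' : ∃ k l, g1' k = g2' l)
    (hm : ∀ v : ℤ, mcnt p g1 g2 v = 0 ∨ 2 ≤ mcnt p g1 g2 v)
    (hc1 : ∀ k, (Slst p g1 g2).idxOf (g1 k) = (Slst p g1' g2').idxOf (g1' k))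
    (hc2 : ∀ k, (Slst p g1 g2).idxOf (g2 k) = (Slst p g1' g2').idxOf (g2' k))
    (hw : ∀ k, k < p - 1 → wint p g1 g2 k = wint p g1' g2' k) :
    Slst p g1 g2 = Slst p g1' g2' := by
  have himg1 : (Finset.univ.image fun k => (Slst p g1 g2).idxOf (g1 k))
      = (Finset.univ.image fun k => (Slst p g1' g2').idxOf (g1' k)) :=
    Finset.image_congr (fun k _ => hc1 k)
  have himg2 : (Finset.univ.image fun k => (Slst p g1 g2).idxOf (g2 k))
      = (Finset.univ.image fun k => (Slst p g1' g2').idxOf (g2' k)) :=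
    Finset.image_congr (fun k _ => hc2 k)
  have hd : (Vst p g1 g2).card = (Vst p g1' g2').card := by
    have h1 := rank_image p g1 g2
    have h2 := rank_image p g1' g2'
    rw [himg1, himg2, h2] at h1
    have := congrArg Finset.card h1
    simp only [Finset.card_range] at this
    omega
  by_cases hdp : (Vst p g1 g2).card = p
  · -- p distinct values; the dropped common minimum is recovered from the alternating sum
    have hdp' : (Vst p g1' g2').card = p := by omega
    obtain ⟨hne, hr0⟩ := r0_eq p g1 g2 hint
    obtain ⟨hne', hr0'⟩ := r0_eq p g1' g2' hint'
    have hr0eq : r0 p g1 g2 = r0 p g1' g2' := by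
      rw [hr0, hr0']
      congr 1 <;> rw [himg1, himg2]
    have hv0V : iMin p g1 g2 ∈ Vst p g1 g2 := inter_sub_Vst p g1 g2 (iMin_mem p g1 g2 hint)
    have hr0lt : r0 p g1 g2 < p := by
      have := idx_lt hv0V; rw [Slst_length, hdp] at this; exact this
    have hlen : (Slst p g1 g2).length = p := by rw [Slst_length, hdp]
    have hlen' : (Slst p g1' g2').length = p := by rw [Slst_length, hdp']
    have hWe : Wlst p g1 g2 = (Slst p g1 g2).eraseIdx (r0 p g1 g2) := if_pos hdp
    have hWe' : Wlst p g1' g2' = (Slst p g1' g2').eraseIdx (r0 p g1' g2') := if_pos hdp'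
    have hSS : ∀ j, j < p → j ≠ r0 p g1 g2 →
        (Slst p g1 g2).getD j 0 = (Slst p g1' g2').getD j 0 := by
      intro j hj hjr
      rcases lt_or_gt_of_ne hjr with h | h
      · have e1 : wint p g1 g2 j = (Slst p g1 g2).getD j 0 := by
          unfold wint; rw [hWe]; exact getD_eraseIdx_of_lt _ _ _ (by omega) h
        have e2 : wint p g1' g2' j = (Slst p g1' g2').getD j 0 := by
          unfold wint; rw [hWe']; rw [← hr0eq]
          exact getD_eraseIdx_of_lt _ _ _ (by omega) h
        rw [← e1, ← e2]
        exact hw j (by omega)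
      · have e1 : wint p g1 g2 (j-1) = (Slst p g1 g2).getD j 0 := by
          unfold wint; rw [hWe]; exact getD_eraseIdx_of_gt _ _ _ (by omega) h
        have e2 : wint p g1' g2' (j-1) = (Slst p g1' g2').getD j 0 := by
          unfold wint; rw [hWe']; rw [← hr0eq]
          exact getD_eraseIdx_of_gt _ _ _ (by omega) h
        rw [← e1, ← e2]
        exact hw (j-1) (by omega)
    -- the common minimum appears exactly once among the g1-coordinates
    have hm2 : mcnt p g1 g2 (iMin p g1 g2) = 2 := mcnt_eq_two p g1 g2 hm hdp _ hv0V
    obtain ⟨hI1, hI2⟩ := Finset.mem_inter.1 (iMin_mem p g1 g2 hint)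
    obtain ⟨a, -, ha⟩ := Finset.mem_image.1 hI1
    obtain ⟨b, -, hb⟩ := Finset.mem_image.1 hI2
    have hc1pos : 0 < (Finset.univ.filter fun k => g1 k = iMin p g1 g2).card :=
      Finset.card_pos.2 ⟨a, by simp [ha]⟩
    have hc2pos : 0 < (Finset.univ.filter fun k => g2 k = iMin p g1 g2).card :=
      Finset.card_pos.2 ⟨b, by simp [hb]⟩
    have hcard1 : (Finset.univ.filter fun k => g1 k = iMin p g1 g2).card = 1 := by
      unfold mcnt at hm2; omega
    obtain ⟨ks, hks⟩ := Finset.card_eq_one.1 hcard1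
    have huniq : ∀ c : Fin p, g1 c = iMin p g1 g2 ↔ c = ks := by
      intro c
      constructor
      · intro hc
        have : c ∈ Finset.univ.filter fun k => g1 k = iMin p g1 g2 := by simp [hc]
        rw [hks] at this; simpa using this
      · rintro rfl
        have : c ∈ Finset.univ.filter fun k => g1 k = iMin p g1 g2 := by rw [hks]; simp
        simpa using this
    have hg1 : ∀ c : Fin p, c ≠ ks → g1 c = g1' c := by
      intro c hc
      have hcv : g1 c ≠ iMin p g1 g2 := fun h => hc ((huniq c).1 h)
      have hidxne : (Slst p g1 g2).idxOf (g1 c) ≠ r0 p g1 g2 := by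
        intro h
        exact hcv ((idx_inj (mem_Vst_left p g1 g2 c) hv0V).1 h)
      have hidxlt : (Slst p g1 g2).idxOf (g1 c) < p := by
        have := idx_lt (mem_Vst_left p g1 g2 c); omega
      have e1 : g1 c = (Slst p g1 g2).getD ((Slst p g1 g2).idxOf (g1 c)) 0 :=
        (getd_idx (mem_Vst_left p g1 g2 c)).symm
      have e2 : g1' c = (Slst p g1' g2').getD ((Slst p g1' g2').idxOf (g1' c)) 0 :=
        (getd_idx (mem_Vst_left p g1' g2' c)).symm
      rw [e1, e2, ← hc1 c, hSS _ hidxlt hidxne]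
    have hzero : ∑ k : Fin p, (-1:ℤ)^((k:ℕ)+1) * (g1 k - g1' k) = 0 := by
      have : ∑ k : Fin p, (-1:ℤ)^((k:ℕ)+1) * (g1 k - g1' k)
          = (∑ k : Fin p, (-1:ℤ)^((k:ℕ)+1) * g1 k)
            - ∑ k : Fin p, (-1:ℤ)^((k:ℕ)+1) * g1' k := by
        rw [← Finset.sum_sub_distrib]
        exact Finset.sum_congr rfl (fun k _ => by ring)
      rw [this, hsum, hsum', sub_zero]
    have hsingle : ∑ k : Fin p, (-1:ℤ)^((k:ℕ)+1) * (g1 k - g1' k)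
        = (-1:ℤ)^((ks:ℕ)+1) * (g1 ks - g1' ks) := by
      refine Finset.sum_eq_single ks (fun c _ hc => ?_) (fun h => absurd (Finset.mem_univ ks) h)
      rw [hg1 c hc]; ring
    have hksval : g1 ks = g1' ks := by
      rw [hsingle] at hzero
      have hne0 : ((-1:ℤ)^((ks:ℕ)+1)) ≠ 0 := pow_ne_zero _ (by norm_num)
      rcases mul_eq_zero.1 hzero with h | h
      · exact absurd h hne0
      · linarith [sub_eq_zero.1 h]
    have hks0 : g1 ks = iMin p g1 g2 := (huniq ks).2 rfl
    have hSr0 : (Slst p g1 g2).getD (r0 p g1 g2) 0 = (Slst p g1' g2').getD (r0 p g1 g2) 0 := by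
      have e1 : (Slst p g1 g2).getD (r0 p g1 g2) 0 = g1 ks := by
        rw [hks0]; exact getd_idx hv0V
      have hidx : (Slst p g1' g2').idxOf (g1' ks) = r0 p g1 g2 := by
        rw [← hc1 ks, hks0]; rfl
      have e2 : (Slst p g1' g2').getD (r0 p g1 g2) 0 = g1' ks := by
        rw [← hidx]; exact getd_idx (mem_Vst_left p g1' g2' ks)
      rw [e1, e2, hksval]
    apply List.ext_getElem (by rw [hlen, hlen'])
    intro n h1 h2
    have hn : n < p := by omega
    by_cases hnr : n = r0 p g1 g2
    · subst hnr
      rw [← List.getD_eq_getElem _ 0 h1, ← List.getD_eq_getElem _ 0 h2]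
      exact hSr0
    · rw [← List.getD_eq_getElem _ 0 h1, ← List.getD_eq_getElem _ 0 h2]
      exact hSS n hn hnr
  · -- at most p-1 distinct values; nothing was dropped
    have hle : (Vst p g1 g2).card ≤ p := card_Vst_le_p p g1 g2 hm
    have hdp' : ¬ (Vst p g1' g2').card = p := by omega
    have hWe : Wlst p g1 g2 = Slst p g1 g2 := if_neg hdp
    have hWe' : Wlst p g1' g2' = Slst p g1' g2' := if_neg hdp'
    apply List.ext_getElem (by rw [Slst_length, Slst_length, hd])
    intro n h1 h2
    have hn : n < p - 1 := by
      rw [Slst_length] at h1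
      omega
    have hwn := hw n hn
    unfold wint at hwn
    rw [hWe, hWe', List.getD_eq_getElem _ _ h1, List.getD_eq_getElem _ _ h2] at hwn
    exact hwn

lemma encode_inj (p : ℕ) (g1 g2 g1' g2' : Fin p → ℤ)
    (hsum : ∑ k : Fin p, (-1:ℤ)^((k:ℕ)+1) * g1 k = 0)
    (hsum' : ∑ k : Fin p, (-1:ℤ)^((k:ℕ)+1) * g1' k = 0)
    (hint : ∃ k l, g1 k = g2 l)
    (hint' : ∃ k l, g1' k = g2' l)
    (hm : ∀ v : ℤ, mcnt p g1 g2 v = 0 ∨ 2 ≤ mcnt p g1 g2 v)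
    (hc1 : ∀ k, (Slst p g1 g2).idxOf (g1 k) = (Slst p g1' g2').idxOf (g1' k))
    (hc2 : ∀ k, (Slst p g1 g2).idxOf (g2 k) = (Slst p g1' g2').idxOf (g2' k))
    (hw : ∀ k, k < p - 1 → wint p g1 g2 k = wint p g1' g2' k) :
    g1 = g1' ∧ g2 = g2' := by
  have hS := slst_eq p g1 g2 g1' g2' hsum hsum' hint hint' hm hc1 hc2 hw
  constructor
  · funext c
    have e1 := getd_idx (mem_Vst_left p g1 g2 c)
    have e2 := getd_idx (mem_Vst_left p g1' g2' c)
    rw [← e1, ← e2, hc1 c, hS]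
  · funext c
    have e1 := getd_idx (mem_Vst_right p g1 g2 c)
    have e2 := getd_idx (mem_Vst_right p g1' g2' c)
    rw [← e1, ← e2, hc2 c, hS]

end BP2

open Finset

set_option maxHeartbeats 1000000 in
set_option synthInstance.maxHeartbeats 400000 in
/-- `|B_{P₂}| = O(b_n^{p-1})`: pairs `(J¹,J²) ∈ A_p × A_p` whose coordinate
multisets intersect and in which every value of the combined multiset has
multiplicity at least `2` number at most `C(p) · b_n^{p-1}`. -/
theorem count_B_P2_bound (p : ℕ) (hp : 2 ≤ p) (hpe : Even p) :
    ∃ C : ℕ, ∀ bn : ℕ, 0 < bn →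
      Nat.card {J : (Fin p → ℤ) × (Fin p → ℤ) //
        (∀ k, J.1 k ≠ 0 ∧ |J.1 k| ≤ (bn : ℤ)) ∧
        (∀ k, J.2 k ≠ 0 ∧ |J.2 k| ≤ (bn : ℤ)) ∧
        (∑ k : Fin p, (-1 : ℤ) ^ ((k : ℕ) + 1) * J.1 k) = 0 ∧
        (∑ k : Fin p, (-1 : ℤ) ^ ((k : ℕ) + 1) * J.2 k) = 0 ∧
        (∃ (k l : Fin p), J.1 k = J.2 l) ∧
        (∀ v : ℤ,
          (Finset.univ.filter (fun k : Fin p => J.1 k = v)).card +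
              (Finset.univ.filter (fun k : Fin p => J.2 k = v)).card = 0 ∨
          2 ≤ (Finset.univ.filter (fun k : Fin p => J.1 k = v)).card +
              (Finset.univ.filter (fun k : Fin p => J.2 k = v)).card)} ≤
      C * bn ^ (p - 1) := by
  refine ⟨(2*p+1)^(2*p) * 3^(p-1), fun bn hbn => ?_⟩
  have hcard : Nat.card ((Fin p → Fin (2*p+1)) × (Fin p → Fin (2*p+1)) ×
      (Fin (p-1) → (Finset.Icc (-(bn:ℤ)) (bn:ℤ))))
      = (2*p+1)^p * ((2*p+1)^p * (2*bn+1)^(p-1)) := by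
    have hIcc : Fintype.card (Finset.Icc (-(bn:ℤ)) (bn:ℤ)) = 2*bn+1 := by
      rw [Fintype.card_coe, Int.card_Icc]
      omega
    rw [Nat.card_eq_fintype_card]
    simp [Fintype.card_fun, hIcc]
  refine le_trans (Nat.card_le_card_of_injective
    (fun J => ((fun k => BP2.rnk p J.1.1 J.1.2 (J.1.1 k),
      fun k => BP2.rnk p J.1.1 J.1.2 (J.1.2 k),
      fun k : Fin (p-1) => (⟨BP2.wint p J.1.1 J.1.2 k,
        BP2.mem_Icc_of_wint p bn hbn _ _ (fun i => (J.2.1 i).2) (fun i => (J.2.2.1 i).2) k⟩ :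
        Finset.Icc (-(bn:ℤ)) (bn:ℤ))) :
      (Fin p → Fin (2*p+1)) × (Fin p → Fin (2*p+1)) ×
        (Fin (p-1) → (Finset.Icc (-(bn:ℤ)) (bn:ℤ))))) ?_) ?_
  · intro J J' h
    simp only [Prod.mk.injEq] at h
    obtain ⟨h1, h2, h3⟩ := h
    have hc1 : ∀ k, (BP2.Slst p J.1.1 J.1.2).idxOf (J.1.1 k)
        = (BP2.Slst p J'.1.1 J'.1.2).idxOf (J'.1.1 k) :=
      fun k => congrArg Fin.val (congrFun h1 k)
    have hc2 : ∀ k, (BP2.Slst p J.1.1 J.1.2).idxOf (J.1.2 k)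
        = (BP2.Slst p J'.1.1 J'.1.2).idxOf (J'.1.2 k) :=
      fun k => congrArg Fin.val (congrFun h2 k)
    have hw : ∀ k, k < p - 1 → BP2.wint p J.1.1 J.1.2 k = BP2.wint p J'.1.1 J'.1.2 k :=
      fun k hk => congrArg Subtype.val (congrFun h3 ⟨k, hk⟩)
    obtain ⟨-, -, hs1, -, hI, hM⟩ := J.2
    obtain ⟨-, -, hs1', -, hI', -⟩ := J'.2
    obtain ⟨hg1, hg2⟩ := BP2.encode_inj p J.1.1 J.1.2 J'.1.1 J'.1.2 hs1 hs1' hI hI'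
      (fun v => hM v) hc1 hc2 hw
    exact Subtype.ext (Prod.ext hg1 hg2)
  · rw [hcard]
    have h1 : (2*bn+1)^(p-1) ≤ 3^(p-1) * bn^(p-1) := by
      rw [← mul_pow]
      exact Nat.pow_le_pow_left (by omega) _
    calc (2*p+1)^p * ((2*p+1)^p * (2*bn+1)^(p-1))
        = (2*p+1)^(2*p) * (2*bn+1)^(p-1) := by ring
      _ ≤ (2*p+1)^(2*p) * (3^(p-1) * bn^(p-1)) := Nat.mul_le_mul_left _ h1
      _ = (2*p+1)^(2*p) * 3^(p-1) * bn^(p-1) := by ring
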